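/- arXiv:1209.2551 — 2 statements merged into one kernel-verified Lean document; each statement's English description precedes it below -/
import Mathlib

section
/- Under the hypotheses of Radner's theorem (x, v mean-zero Gaussian, Q_uu ≻ 0, measurements y_i = C_i x + v_i), if u* is a linear structured decision such that for each i the random variable [(u* - Lx)ᵀ Q_uu]_i is independent of y_i and has zero mean, then for every measurable structured decision μ (with μ_i a function of y_i only), E[(μ(y) - Lx)ᵀ Q_uu (μ(y) - Lx)] ≥ E[(u* - Lx)ᵀ Q_uu (u* - Lx)], with equality iff μ(y) = u* almost surely. -/
open Matrix MeasureTheory ProbabilityTheory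

section helpers

variable {Ω : Type*} [MeasurableSpace Ω] {P : Measure Ω}

lemma radner_l2_mul_integrable {f g : Ω → ℝ} (hf : MemLp f 2 P) (hg : MemLp g 2 P) :
    Integrable (fun ω => f ω * g ω) P := by
  have h : MemLp (g • f) 1 P :=
    hf.smul hg (hpqr := ⟨by rw [inv_one, ENNReal.inv_two_add_inv_two]⟩)
  rw [memLp_one_iff_integrable] at h
  have h' : Integrable (f * g) P := by simpa [Pi.smul_apply, smul_eq_mul, mul_comm] using h
  exact h'

lemma radner_comp_proj {ι : Type*} [Fintype ι] {f : Ω → ι → ℝ} (hf : MemLp f 2 P) (i : ι) :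
    MemLp (fun ω => f ω i) 2 P := by
  have := (ContinuousLinearMap.proj (R := ℝ) (φ := fun _ : ι => ℝ) i).comp_memLp' hf
  simpa [Function.comp_def] using this

lemma radner_mulVec_memℒp {ι κ : Type*} [Fintype ι] [Fintype κ]
    (A : Matrix ι κ ℝ) {f : Ω → κ → ℝ} (hf : MemLp f 2 P) :
    MemLp (fun ω => A *ᵥ f ω) 2 P := by
  have := (LinearMap.toContinuousLinearMap (Matrix.mulVecLin A)).comp_memLp' hf
  simpa [Function.comp_def] using this

lemma radner_integrable_dot {ι : Type*} [Fintype ι] {f g : Ω → ι → ℝ}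
    (hf : MemLp f 2 P) (hg : MemLp g 2 P) :
    Integrable (fun ω => f ω ⬝ᵥ g ω) P := by
  simp only [dotProduct]
  exact integrable_finset_sum _ fun i _ =>
    radner_l2_mul_integrable (radner_comp_proj hf i) (radner_comp_proj hg i)

end helpers

/-- Radner's theorem, optimality part. Static LQG team with `N` players:
state `x`, measurements `y i` of player `i`, decision coordinates indexed by the
sigma type `(i : Fin N) × Fin (m i)`, `Quu ≻ 0`, `L ∈ ℝ^{m×n}`. If `u*` is a
linear structured decision such that for each `i` the block
`[(u* - Lx)ᵀ Quu]_i` is independent of `y i` and has zero mean, then every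
measurable structured decision `μ` (with `μ i` a function of `y i` only) has
cost `E[(μ(y) - Lx)ᵀ Quu (μ(y) - Lx)] ≥ E[(u* - Lx)ᵀ Quu (u* - Lx)]`, with
equality iff `μ(y) = u*` almost surely. -/
theorem stmt6 {N n : ℕ} {m p : Fin N → ℕ} {Ω : Type*} [MeasurableSpace Ω]
    (P : Measure Ω) [IsProbabilityMeasure P]
    (x : Ω → Fin n → ℝ) (hx : Measurable x)
    (y : (i : Fin N) → Ω → Fin (p i) → ℝ) (hy : ∀ i, Measurable (y i))
    (Quu : Matrix ((i : Fin N) × Fin (m i)) ((i : Fin N) × Fin (m i)) ℝ)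
    (hQuu : Quu.PosDef)
    (L : Matrix ((i : Fin N) × Fin (m i)) (Fin n) ℝ)
    (ustar : Ω → (i : Fin N) × Fin (m i) → ℝ)
    -- u* is a linear structured decision:
    (hlin : ∃ K : (i : Fin N) → Matrix (Fin (m i)) (Fin (p i)) ℝ,
      ∀ ω (i : Fin N) (k : Fin (m i)), ustar ω ⟨i, k⟩ = (K i *ᵥ y i ω) k)
    -- for each i, [(u* - Lx)ᵀ Quu]_i is independent of y i and has zero mean:
    (hindep : ∀ i : Fin N,
      IndepFun (fun ω => fun k : Fin (m i) => ((ustar ω - L *ᵥ x ω) ᵥ* Quu) ⟨i, k⟩)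
        (y i) P)
    (hmean : ∀ (i : Fin N) (k : Fin (m i)),
      ∫ ω, ((ustar ω - L *ᵥ x ω) ᵥ* Quu) ⟨i, k⟩ ∂P = 0)
    -- square integrability:
    (hx2 : MemLp x 2 P) (hustar2 : MemLp ustar 2 P)
    -- an arbitrary measurable structured decision μ:
    (μdec : (i : Fin N) → (Fin (p i) → ℝ) → Fin (m i) → ℝ)
    (hμmeas : ∀ i, Measurable (μdec i))
    (hμ2 : MemLp (fun ω => fun ik : (i : Fin N) × Fin (m i) =>
      μdec ik.1 (y ik.1 ω) ik.2) 2 P) :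
    (∫ ω, ((fun ik : (i : Fin N) × Fin (m i) => μdec ik.1 (y ik.1 ω) ik.2) - L *ᵥ x ω) ⬝ᵥ
        (Quu *ᵥ ((fun ik : (i : Fin N) × Fin (m i) => μdec ik.1 (y ik.1 ω) ik.2) - L *ᵥ x ω)) ∂P ≥
      ∫ ω, (ustar ω - L *ᵥ x ω) ⬝ᵥ (Quu *ᵥ (ustar ω - L *ᵥ x ω)) ∂P) ∧
    ((∫ ω, ((fun ik : (i : Fin N) × Fin (m i) => μdec ik.1 (y ik.1 ω) ik.2) - L *ᵥ x ω) ⬝ᵥ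
        (Quu *ᵥ ((fun ik : (i : Fin N) × Fin (m i) => μdec ik.1 (y ik.1 ω) ik.2) - L *ᵥ x ω)) ∂P =
      ∫ ω, (ustar ω - L *ᵥ x ω) ⬝ᵥ (Quu *ᵥ (ustar ω - L *ᵥ x ω)) ∂P) ↔
      (fun ω => fun ik : (i : Fin N) × Fin (m i) => μdec ik.1 (y ik.1 ω) ik.2) =ᵐ[P] ustar) := by
  classical
  obtain ⟨K, hK⟩ := hlin
  -- abbreviations
  let μf : Ω → ((i : Fin N) × Fin (m i)) → ℝ := fun ω ik => μdec ik.1 (y ik.1 ω) ik.2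
  let d : Ω → ((i : Fin N) × Fin (m i)) → ℝ := fun ω => ustar ω - L *ᵥ x ω
  let e : Ω → ((i : Fin N) × Fin (m i)) → ℝ := fun ω => μf ω - ustar ω
  let g : Ω → ((i : Fin N) × Fin (m i)) → ℝ := fun ω => (ustar ω - L *ᵥ x ω) ᵥ* Quu
  -- symmetry of Quu
  have hsym : Quuᵀ = Quu := by
    ext i j
    have := congrFun (congrFun hQuu.1 i) j
    simpa [Matrix.conjTranspose_apply] using this
  have hvm : ∀ v : ((i : Fin N) × Fin (m i)) → ℝ, v ᵥ* Quu = Quu *ᵥ v := fun v => by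
    conv_lhs => rw [← hsym, Matrix.vecMul_transpose]
  -- square integrability facts
  have hLx2 : MemLp (fun ω => L *ᵥ x ω) 2 P := radner_mulVec_memℒp L hx2
  have hd2 : MemLp d 2 P := hustar2.sub hLx2
  have hg2 : MemLp g 2 P := by
    have h1 : MemLp (fun ω => Quu *ᵥ d ω) 2 P := radner_mulVec_memℒp Quu hd2
    have : g = fun ω => Quu *ᵥ d ω := funext fun ω => hvm _
    rwa [this]
  have he2 : MemLp e 2 P := hμ2.sub hustar2
  have hQe2 : MemLp (fun ω => Quu *ᵥ e ω) 2 P := radner_mulVec_memℒp Quu he2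
  have hQd2 : MemLp (fun ω => Quu *ᵥ d ω) 2 P := radner_mulVec_memℒp Quu hd2
  -- integrability of the quadratic terms
  have Iqe : Integrable (fun ω => e ω ⬝ᵥ (Quu *ᵥ e ω)) P := radner_integrable_dot he2 hQe2
  have Iqd : Integrable (fun ω => d ω ⬝ᵥ (Quu *ᵥ d ω)) P := radner_integrable_dot hd2 hQd2
  have Icross : Integrable (fun ω => g ω ⬝ᵥ e ω) P := radner_integrable_dot hg2 he2
  -- pointwise decomposition of the cost
  have hpt : ∀ ω, (μf ω - L *ᵥ x ω) ⬝ᵥ (Quu *ᵥ (μf ω - L *ᵥ x ω)) =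
      e ω ⬝ᵥ (Quu *ᵥ e ω) + 2 * (g ω ⬝ᵥ e ω) + d ω ⬝ᵥ (Quu *ᵥ d ω) := by
    intro ω
    have hsum : μf ω - L *ᵥ x ω = e ω + d ω := by
      simp only [e, d, μf]; abel
    have hge : g ω ⬝ᵥ e ω = d ω ⬝ᵥ (Quu *ᵥ e ω) := by
      show (d ω ᵥ* Quu) ⬝ᵥ e ω = d ω ⬝ᵥ (Quu *ᵥ e ω)
      rw [← dotProduct_mulVec]
    have heg : e ω ⬝ᵥ (Quu *ᵥ d ω) = g ω ⬝ᵥ e ω := by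
      rw [dotProduct_comm]
      show (Quu *ᵥ d ω) ⬝ᵥ e ω = (d ω ᵥ* Quu) ⬝ᵥ e ω
      rw [hvm]
    rw [hsum, Matrix.mulVec_add, dotProduct_add, add_dotProduct,
      add_dotProduct, heg, hge]
    ring
  -- cross term vanishes
  have hcross : ∫ ω, g ω ⬝ᵥ e ω ∂P = 0 := by
    have hint : ∀ ik : ((i : Fin N) × Fin (m i)),
        Integrable (fun ω => g ω ik * e ω ik) P := fun ik =>
      radner_l2_mul_integrable (radner_comp_proj hg2 ik) (radner_comp_proj he2 ik)
    calc ∫ ω, g ω ⬝ᵥ e ω ∂P = ∑ ik : ((i : Fin N) × Fin (m i)), ∫ ω, g ω ik * e ω ik ∂P := by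
          simp only [dotProduct]
          exact integral_finset_sum _ fun ik _ => hint ik
      _ = 0 := by
          refine Finset.sum_eq_zero fun ik _ => ?_
          obtain ⟨i, k⟩ := ik
          have hψ : Measurable (fun z : Fin (p i) → ℝ => μdec i z k - (K i *ᵥ z) k) := by
            refine ((measurable_pi_apply k).comp (hμmeas i)).sub ?_
            simpa [Matrix.mulVec, dotProduct] using
              Finset.measurable_sum Finset.univ
                (fun j _ => (measurable_pi_apply (X := fun _ : Fin (p i) => ℝ) j).const_mul (K i k j))
          have hI : IndepFun (fun ω => g ω ⟨i, k⟩) (fun ω => e ω ⟨i, k⟩) P := by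
            have h2 := (hindep i).comp (measurable_pi_apply (X := fun _ : Fin (m i) => ℝ) k) hψ
            have hEq : (fun ω => (fun z : Fin (p i) → ℝ => μdec i z k - (K i *ᵥ z) k) (y i ω))
                = fun ω => e ω ⟨i, k⟩ := by
              funext ω
              simp only [e, μf, Pi.sub_apply, hK ω i k]
            have h2' : IndepFun (fun ω => g ω ⟨i, k⟩)
                (fun ω => μdec i (y i ω) k - (K i *ᵥ y i ω) k) P := by
              simpa [Function.comp_def] using h2
            rw [hEq] at h2'
            exact h2'
          have := hI.integral_mul_eq_mul_integral
            (radner_comp_proj hg2 ⟨i, k⟩).aestronglyMeasurable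
            (radner_comp_proj he2 ⟨i, k⟩).aestronglyMeasurable
          have hzero : ∫ ω, g ω ⟨i, k⟩ ∂P = 0 := hmean i k
          calc ∫ ω, g ω ⟨i, k⟩ * e ω ⟨i, k⟩ ∂P
              = (∫ ω, g ω ⟨i, k⟩ ∂P) * ∫ ω, e ω ⟨i, k⟩ ∂P := this
            _ = 0 := by rw [hzero, zero_mul]
  -- splitting the cost integral
  have hsplit : ∫ ω, (μf ω - L *ᵥ x ω) ⬝ᵥ (Quu *ᵥ (μf ω - L *ᵥ x ω)) ∂P =
      (∫ ω, e ω ⬝ᵥ (Quu *ᵥ e ω) ∂P) + ∫ ω, d ω ⬝ᵥ (Quu *ᵥ d ω) ∂P := by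
    calc ∫ ω, (μf ω - L *ᵥ x ω) ⬝ᵥ (Quu *ᵥ (μf ω - L *ᵥ x ω)) ∂P
        = ∫ ω, (e ω ⬝ᵥ (Quu *ᵥ e ω) + 2 * (g ω ⬝ᵥ e ω) + d ω ⬝ᵥ (Quu *ᵥ d ω)) ∂P := by
          simp only [hpt]
      _ = (∫ ω, (e ω ⬝ᵥ (Quu *ᵥ e ω) + 2 * (g ω ⬝ᵥ e ω)) ∂P) +
            ∫ ω, d ω ⬝ᵥ (Quu *ᵥ d ω) ∂P :=
          integral_add (Iqe.add (Icross.const_mul 2)) Iqd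
      _ = (∫ ω, e ω ⬝ᵥ (Quu *ᵥ e ω) ∂P) + 2 * (∫ ω, g ω ⬝ᵥ e ω ∂P) +
            ∫ ω, d ω ⬝ᵥ (Quu *ᵥ d ω) ∂P := by
          rw [integral_add Iqe (Icross.const_mul 2), integral_const_mul]
      _ = _ := by rw [hcross]; ring
  -- nonnegativity of the error quadratic form
  have hnn : ∀ ω, 0 ≤ e ω ⬝ᵥ (Quu *ᵥ e ω) := fun ω => by
    simpa using hQuu.posSemidef.dotProduct_mulVec_nonneg (e ω)
  have henn : 0 ≤ ∫ ω, e ω ⬝ᵥ (Quu *ᵥ e ω) ∂P := integral_nonneg hnn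
  constructor
  · show (∫ ω, (μf ω - L *ᵥ x ω) ⬝ᵥ (Quu *ᵥ (μf ω - L *ᵥ x ω)) ∂P) ≥
      ∫ ω, d ω ⬝ᵥ (Quu *ᵥ d ω) ∂P
    rw [hsplit]; linarith
  · have h1 : (∫ ω, (μf ω - L *ᵥ x ω) ⬝ᵥ (Quu *ᵥ (μf ω - L *ᵥ x ω)) ∂P =
        ∫ ω, d ω ⬝ᵥ (Quu *ᵥ d ω) ∂P) ↔ ∫ ω, e ω ⬝ᵥ (Quu *ᵥ e ω) ∂P = 0 := by
      rw [hsplit]; constructor <;> intro h <;> linarith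
    have h2 : (∫ ω, e ω ⬝ᵥ (Quu *ᵥ e ω) ∂P = 0) ↔
        (fun ω => e ω ⬝ᵥ (Quu *ᵥ e ω)) =ᵐ[P] 0 :=
      integral_eq_zero_iff_of_nonneg hnn Iqe
    have h3 : ((fun ω => e ω ⬝ᵥ (Quu *ᵥ e ω)) =ᵐ[P] 0) ↔ μf =ᵐ[P] ustar := by
      constructor
      · intro h
        filter_upwards [h] with ω hω
        by_contra hne
        have hene : e ω ≠ 0 := fun h0 => hne (by
          have : μf ω - ustar ω = 0 := h0
          exact sub_eq_zero.mp this)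
        have := hQuu.dotProduct_mulVec_pos hene
        simp only [Pi.zero_apply] at hω
        simp only [star_trivial] at this
        exact absurd hω (ne_of_gt this)
      · intro h
        filter_upwards [h] with ω hω
        have : e ω = 0 := by simp only [e]; rw [hω, sub_self]
        simp [this]
    exact h1.trans (h2.trans h3)
end

section
/- In the two-player example (C_1=C_2=1, x,v_1,v_2 ∼ N(0,1) independent, Q_xx=1, Q_uu=[[2,1],[1,2]], Q_ux=-[1;1]), the certainty-equivalence policy u_i = (1/6) y_i yields expected cost 11/18 ≈ 0.611, strictly greater than the team-optimal cost 3/5 = 0.600 achieved by u_i = (1/5) y_i; hence separation of estimation and control fails. -/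
open MeasureTheory ProbabilityTheory

lemma mulInt {Ω : Type*} [MeasurableSpace Ω] (P : Measure Ω) (f g : Ω → ℝ)
    (hf : MemLp f 2 P) (hg : MemLp g 2 P) : Integrable (fun ω => f ω * g ω) P := by
  have h := hf.smul (φ := g) hg (r := 1)
    (hpqr := ⟨by simp [ENNReal.div_add_div_same]; rw [ENNReal.inv_two_add_inv_two]⟩)
  exact memLp_one_iff_integrable.mp (by simpa [smul_eq_mul, mul_comm] using h : MemLp (f * g) 1 P)

lemma costval {Ω : Type*} [MeasurableSpace Ω] (P : Measure Ω)
    [IsProbabilityMeasure P]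
    (x v1 v2 : Ω → ℝ)
    (hx2 : MemLp x 2 P) (hv12 : MemLp v1 2 P) (hv22 : MemLp v2 2 P)
    (hxvar : ∫ ω, (x ω) ^ 2 ∂P = 1)
    (hv1var : ∫ ω, (v1 ω) ^ 2 ∂P = 1) (hv2var : ∫ ω, (v2 ω) ^ 2 ∂P = 1)
    (hxv1 : ∫ ω, x ω * v1 ω ∂P = 0) (hxv2 : ∫ ω, x ω * v2 ω ∂P = 0)
    (hv1v2 : ∫ ω, v1 ω * v2 ω ∂P = 0) (k : ℝ) :
    ∫ ω, ((x ω) ^ 2 - 2 * (k * (x ω + v1 ω) + k * (x ω + v2 ω)) * x ω +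
        (2 * (k * (x ω + v1 ω)) ^ 2 + 2 * (k * (x ω + v1 ω)) * (k * (x ω + v2 ω)) +
          2 * (k * (x ω + v2 ω)) ^ 2)) ∂P = 1 - 4 * k + 10 * k ^ 2 := by
  have ixx : Integrable (fun ω => x ω ^ 2) P := by
    simpa [pow_two] using mulInt P x x hx2 hx2
  have i11 : Integrable (fun ω => v1 ω ^ 2) P := by
    simpa [pow_two] using mulInt P v1 v1 hv12 hv12
  have i22 : Integrable (fun ω => v2 ω ^ 2) P := by
    simpa [pow_two] using mulInt P v2 v2 hv22 hv22
  have ix1 := mulInt P x v1 hx2 hv12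
  have ix2 := mulInt P x v2 hx2 hv22
  have i12 := mulInt P v1 v2 hv12 hv22
  have heq : (fun ω => ((x ω) ^ 2 - 2 * (k * (x ω + v1 ω) + k * (x ω + v2 ω)) * x ω +
        (2 * (k * (x ω + v1 ω)) ^ 2 + 2 * (k * (x ω + v1 ω)) * (k * (x ω + v2 ω)) +
          2 * (k * (x ω + v2 ω)) ^ 2)))
      = fun ω => (1 - 4*k + 6*k^2) * (x ω ^ 2) + ((2*k^2) * (v1 ω ^ 2) +
          ((2*k^2) * (v2 ω ^ 2) + ((-2*k + 6*k^2) * (x ω * v1 ω) +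
          ((-2*k + 6*k^2) * (x ω * v2 ω) + (2*k^2) * (v1 ω * v2 ω))))) := by
    funext ω; ring
  rw [heq]
  have I5 : Integrable (fun ω => (-2*k + 6*k^2) * (x ω * v2 ω) + (2*k^2) * (v1 ω * v2 ω)) P :=
    (ix2.const_mul _).add (i12.const_mul _)
  have I4 : Integrable (fun ω => (-2*k + 6*k^2) * (x ω * v1 ω) +
      ((-2*k + 6*k^2) * (x ω * v2 ω) + (2*k^2) * (v1 ω * v2 ω))) P :=
    (ix1.const_mul _).add I5
  have I3 : Integrable (fun ω => (2*k^2) * (v2 ω ^ 2) + ((-2*k + 6*k^2) * (x ω * v1 ω) +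
      ((-2*k + 6*k^2) * (x ω * v2 ω) + (2*k^2) * (v1 ω * v2 ω)))) P :=
    (i22.const_mul _).add I4
  have I2 : Integrable (fun ω => (2*k^2) * (v1 ω ^ 2) + ((2*k^2) * (v2 ω ^ 2) +
      ((-2*k + 6*k^2) * (x ω * v1 ω) +
      ((-2*k + 6*k^2) * (x ω * v2 ω) + (2*k^2) * (v1 ω * v2 ω))))) P :=
    (i11.const_mul _).add I3
  rw [integral_add (ixx.const_mul _) I2, integral_add (i11.const_mul _) I3,
      integral_add (i22.const_mul _) I4, integral_add (ix1.const_mul _) I5,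
      integral_add (ix2.const_mul _) (i12.const_mul _)]
  simp only [integral_const_mul, hxvar, hv1var, hv2var, hxv1, hxv2, hv1v2]
  ring

/-- Failure of separation in the two-member LQG team example.  With
`x, v₁, v₂` mean-zero, unit-variance, mutually uncorrelated (independent
standard Gaussians), `y_i = x + v_i`, decisions `u_i = k y_i`, and cost
`E[Qxx x² + 2 Qxu·u x + uᵀ Quu u]` with `Qxx = 1`, `Quu = [[2,1],[1,2]]`,
`Qux = -[1;1]`: the certainty-equivalence policy `k = 1/6` yields cost
`11/18`, strictly greater than the team-optimal cost `3/5` of `k = 1/5`. -/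
theorem stmt10 {Ω : Type*} [MeasurableSpace Ω] (P : Measure Ω)
    [IsProbabilityMeasure P]
    (x v1 v2 : Ω → ℝ)
    (hx2 : MemLp x 2 P) (hv12 : MemLp v1 2 P) (hv22 : MemLp v2 2 P)
    (hxm : ∫ ω, x ω ∂P = 0) (hv1m : ∫ ω, v1 ω ∂P = 0) (hv2m : ∫ ω, v2 ω ∂P = 0)
    (hxvar : ∫ ω, (x ω) ^ 2 ∂P = 1)
    (hv1var : ∫ ω, (v1 ω) ^ 2 ∂P = 1) (hv2var : ∫ ω, (v2 ω) ^ 2 ∂P = 1)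
    (hxv1 : ∫ ω, x ω * v1 ω ∂P = 0) (hxv2 : ∫ ω, x ω * v2 ω ∂P = 0)
    (hv1v2 : ∫ ω, v1 ω * v2 ω ∂P = 0) :
    let cost : ℝ → ℝ := fun k =>
      ∫ ω, ((x ω) ^ 2 - 2 * (k * (x ω + v1 ω) + k * (x ω + v2 ω)) * x ω +
        (2 * (k * (x ω + v1 ω)) ^ 2 + 2 * (k * (x ω + v1 ω)) * (k * (x ω + v2 ω)) +
          2 * (k * (x ω + v2 ω)) ^ 2)) ∂P
    cost (1/6) = 11/18 ∧ cost (1/5) = 3/5 ∧ cost (1/5) < cost (1/6) := by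
  intro cost
  have h : ∀ k : ℝ, cost k = 1 - 4 * k + 10 * k ^ 2 := fun k =>
    costval P x v1 v2 hx2 hv12 hv22 hxvar hv1var hv2var hxv1 hxv2 hv1v2 k
  refine ⟨?_, ?_, ?_⟩ <;> simp only [h] <;> norm_num
end
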